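/- Let (X, d) be a compact quasihypermetric space. If μ_n is a d-invariant sequence in M₁(X) with value c (a Cauchy sequence in the seminorm with d_{μ_n} → c·1 uniformly), then M(X) = c < ∞ and μ_n is a maximal sequence, i.e., I(μ_n) → M(X). -/

import Mathlib

open MeasureTheory

/-- Integral of a function against a finite signed Borel measure, via Jordan decomposition. -/
noncomputable def sInt {X : Type*} [MeasurableSpace X] (μ : SignedMeasure X) (f : X → ℝ) : ℝ :=
  (∫ x, f x ∂μ.toJordanDecomposition.posPart) - ∫ x, f x ∂μ.toJordanDecomposition.negPart

/-- Energy `I(μ, ν) = ∫∫ d(x,y) dμ(x) dν(y)` with respect to a kernel `d`. -/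
noncomputable def en {X : Type*} [MeasurableSpace X] (d : X → X → ℝ)
    (μ ν : SignedMeasure X) : ℝ :=
  sInt μ (fun x => sInt ν (fun y => d x y))

/-- The potential `d_μ(x) = ∫ d(x,y) dμ(y)`. -/
noncomputable def dPot {X : Type*} [MeasurableSpace X] (d : X → X → ℝ)
    (μ : SignedMeasure X) (x : X) : ℝ :=
  sInt μ (fun y => d x y)

/-- The set of energies `I(μ)` of signed Borel measures of total mass one. -/
noncomputable def MSet (X : Type*) [MetricSpace X] [MeasurableSpace X] : Set ℝ :=
  {r | ∃ μ : SignedMeasure X, μ Set.univ = (1 : ℝ) ∧ en (fun x y => dist x y) μ μ = r}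

section Aux

open Filter Topology

lemma contIntegrable {Y : Type*} [TopologicalSpace Y] [CompactSpace Y] [T2Space Y]
    [MeasurableSpace Y] [OpensMeasurableSpace Y] (ρ : Measure Y) [IsFiniteMeasure ρ]
    {f : Y → ℝ} (hf : Continuous f) : Integrable f ρ :=
  hf.integrable_of_hasCompactSupport (HasCompactSupport.of_compactSpace f)

variable {X : Type*} [MetricSpace X] [CompactSpace X] [MeasurableSpace X] [BorelSpace X]

/-- total variation weight -/
noncomputable def tvw (μ : SignedMeasure X) : ℝ :=
  (μ.toJordanDecomposition.posPart Set.univ).toReal +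
    (μ.toJordanDecomposition.negPart Set.univ).toReal

lemma tvw_nonneg (μ : SignedMeasure X) : 0 ≤ tvw μ := by
  unfold tvw; positivity

lemma sInt_repr (μ : SignedMeasure X) (P N : Measure X) [IsFiniteMeasure P] [IsFiniteMeasure N]
    (h : μ = P.toSignedMeasure - N.toSignedMeasure) {f : X → ℝ} (hf : Continuous f) :
    sInt μ f = (∫ x, f x ∂P) - ∫ x, f x ∂N := by
  have hJ : μ.toJordanDecomposition.posPart.toSignedMeasure -
      μ.toJordanDecomposition.negPart.toSignedMeasure = P.toSignedMeasure - N.toSignedMeasure := by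
    rw [← h]
    exact μ.toSignedMeasure_toJordanDecomposition
  have hM : μ.toJordanDecomposition.posPart + N = μ.toJordanDecomposition.negPart + P := by
    rw [← Measure.toSignedMeasure_eq_toSignedMeasure_iff, Measure.toSignedMeasure_add,
      Measure.toSignedMeasure_add]
    rw [sub_eq_sub_iff_add_eq_add] at hJ
    rw [hJ, add_comm]
  have h1 : (∫ x, f x ∂(μ.toJordanDecomposition.posPart + N)) =
      ∫ x, f x ∂(μ.toJordanDecomposition.negPart + P) := by rw [hM]
  rw [integral_add_measure (contIntegrable _ hf) (contIntegrable _ hf),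
    integral_add_measure (contIntegrable _ hf) (contIntegrable _ hf)] at h1
  unfold sInt
  linarith

lemma sInt_sub_measure (μ ν : SignedMeasure X) {f : X → ℝ} (hf : Continuous f) :
    sInt (μ - ν) f = sInt μ f - sInt ν f := by
  have h : μ - ν = (μ.toJordanDecomposition.posPart + ν.toJordanDecomposition.negPart).toSignedMeasure
      - (μ.toJordanDecomposition.negPart + ν.toJordanDecomposition.posPart).toSignedMeasure := by
    rw [Measure.toSignedMeasure_add, Measure.toSignedMeasure_add]
    have h1 : μ.toJordanDecomposition.posPart.toSignedMeasure -
        μ.toJordanDecomposition.negPart.toSignedMeasure = μ :=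
      μ.toSignedMeasure_toJordanDecomposition
    have h2 : ν.toJordanDecomposition.posPart.toSignedMeasure -
        ν.toJordanDecomposition.negPart.toSignedMeasure = ν :=
      ν.toSignedMeasure_toJordanDecomposition
    conv_lhs => rw [← h1, ← h2]
    abel
  rw [sInt_repr _ _ _ h hf, integral_add_measure (contIntegrable _ hf) (contIntegrable _ hf),
    integral_add_measure (contIntegrable _ hf) (contIntegrable _ hf)]
  unfold sInt; ring

lemma signed_apply_univ (μ : SignedMeasure X) :
    μ Set.univ = (μ.toJordanDecomposition.posPart Set.univ).toReal -
      (μ.toJordanDecomposition.negPart Set.univ).toReal := by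
  conv_lhs => rw [← μ.toSignedMeasure_toJordanDecomposition]
  rw [JordanDecomposition.toSignedMeasure, VectorMeasure.sub_apply,
    Measure.toSignedMeasure_apply_measurable MeasurableSet.univ,
    Measure.toSignedMeasure_apply_measurable MeasurableSet.univ]
  rfl

lemma sInt_const (μ : SignedMeasure X) (r : ℝ) :
    sInt μ (fun _ => r) = r * μ Set.univ := by
  unfold sInt
  rw [integral_const, integral_const, signed_apply_univ, smul_eq_mul, smul_eq_mul]
  simp only [measureReal_def]
  ring

lemma sInt_sub_fun (μ : SignedMeasure X) {f g : X → ℝ} (hf : Continuous f) (hg : Continuous g) :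
    sInt μ (fun x => f x - g x) = sInt μ f - sInt μ g := by
  unfold sInt
  rw [integral_sub (contIntegrable _ hf) (contIntegrable _ hg),
    integral_sub (contIntegrable _ hf) (contIntegrable _ hg)]
  ring

lemma sInt_bound (μ : SignedMeasure X) {f : X → ℝ} {b : ℝ} (hf : Continuous f)
    (hb : ∀ x, |f x| ≤ b) : |sInt μ f| ≤ b * tvw μ := by
  have h1 : ‖∫ x, f x ∂μ.toJordanDecomposition.posPart‖ ≤
      b * (μ.toJordanDecomposition.posPart Set.univ).toReal :=
    norm_integral_le_of_norm_le_const (Filter.Eventually.of_forall fun x => hb x)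
  have h2 : ‖∫ x, f x ∂μ.toJordanDecomposition.negPart‖ ≤
      b * (μ.toJordanDecomposition.negPart Set.univ).toReal :=
    norm_integral_le_of_norm_le_const (Filter.Eventually.of_forall fun x => hb x)
  rw [Real.norm_eq_abs] at h1 h2
  unfold sInt tvw
  refine le_trans (abs_sub _ _) ?_
  linarith

lemma kInt_lipschitz (ρ : Measure X) [IsFiniteMeasure ρ] (x x' : X) :
    |(∫ y, dist x y ∂ρ) - ∫ y, dist x' y ∂ρ| ≤ dist x x' * (ρ Set.univ).toReal := by
  have c1 : Continuous fun y => dist x y := continuous_const.dist continuous_id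
  have c2 : Continuous fun y => dist x' y := continuous_const.dist continuous_id
  rw [← integral_sub (contIntegrable ρ c1) (contIntegrable ρ c2)]
  have := norm_integral_le_of_norm_le_const (μ := ρ) (f := fun y => dist x y - dist x' y)
    (C := dist x x') (Filter.Eventually.of_forall fun y => by
      rw [Real.norm_eq_abs]; exact abs_dist_sub_le x x' y)
  rwa [Real.norm_eq_abs] at this

lemma kInt_continuous (ρ : Measure X) [IsFiniteMeasure ρ] :
    Continuous (fun x => ∫ y, dist x y ∂ρ) := by
  have : LipschitzWith (ρ Set.univ).toReal.toNNReal (fun x => ∫ y, dist x y ∂ρ) := by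
    apply LipschitzWith.of_dist_le_mul
    intro x x'
    rw [Real.dist_eq]
    calc |(∫ y, dist x y ∂ρ) - ∫ y, dist x' y ∂ρ| ≤ dist x x' * (ρ Set.univ).toReal :=
        kInt_lipschitz ρ x x'
      _ ≤ _ := by
        rw [Real.coe_toNNReal _ ENNReal.toReal_nonneg]; ring_nf; rfl
  exact this.continuous

lemma dPot_continuous (μ : SignedMeasure X) : Continuous (dPot (fun x y => dist x y) μ) := by
  unfold dPot sInt
  exact (kInt_continuous _).sub (kInt_continuous _)

lemma en_def (μ ν : SignedMeasure X) :
    en (fun x y => dist x y) μ ν = sInt μ (dPot (fun x y => dist x y) ν) := rfl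

lemma dPot_sub (μ ν : SignedMeasure X) (x : X) :
    dPot (fun x y => dist x y) (μ - ν) x =
      dPot (fun x y => dist x y) μ x - dPot (fun x y => dist x y) ν x :=
  sInt_sub_measure μ ν (continuous_const.dist continuous_id)

lemma en_comm (μ ν : SignedMeasure X) :
    en (fun x y => dist x y) μ ν = en (fun x y => dist x y) ν μ := by
  have key : ∀ (P Q : Measure X) [IsFiniteMeasure P] [IsFiniteMeasure Q],
      (∫ x, ∫ y, dist x y ∂Q ∂P) = ∫ x, ∫ y, dist x y ∂P ∂Q := by
    intro P Q _ _
    have hint : Integrable (Function.uncurry fun x y => dist x y) (P.prod Q) :=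
      contIntegrable _ continuous_dist
    rw [integral_integral_swap hint]
    simp_rw [dist_comm]
  have split : ∀ (ρ P N : Measure X) [IsFiniteMeasure ρ] [IsFiniteMeasure P] [IsFiniteMeasure N],
      (∫ x, ((∫ y, dist x y ∂P) - ∫ y, dist x y ∂N) ∂ρ)
        = (∫ x, ∫ y, dist x y ∂P ∂ρ) - ∫ x, ∫ y, dist x y ∂N ∂ρ := by
    intro ρ P N _ _ _
    exact integral_sub (contIntegrable _ (kInt_continuous P)) (contIntegrable _ (kInt_continuous N))
  simp only [en, sInt]
  rw [split, split, split, split,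
    key μ.toJordanDecomposition.posPart ν.toJordanDecomposition.posPart,
    key μ.toJordanDecomposition.posPart ν.toJordanDecomposition.negPart,
    key μ.toJordanDecomposition.negPart ν.toJordanDecomposition.posPart,
    key μ.toJordanDecomposition.negPart ν.toJordanDecomposition.negPart]
  ring


lemma enF (ν ρ : SignedMeasure X) :
    en (fun x y => dist x y) (ν - ρ) (ν - ρ) =
      en (fun x y => dist x y) ν ν + en (fun x y => dist x y) ρ ρ -
        2 * sInt ν (dPot (fun x y => dist x y) ρ) := by
  have h1 : en (fun x y => dist x y) (ν - ρ) (ν - ρ)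
      = sInt ν (dPot (fun x y => dist x y) (ν - ρ)) -
        sInt ρ (dPot (fun x y => dist x y) (ν - ρ)) :=
    sInt_sub_measure ν ρ (dPot_continuous _)
  have h2 : ∀ τ : SignedMeasure X, sInt τ (dPot (fun x y => dist x y) (ν - ρ))
      = sInt τ (dPot (fun x y => dist x y) ν) - sInt τ (dPot (fun x y => dist x y) ρ) := by
    intro τ
    have hfe : dPot (fun x y => dist x y) (ν - ρ) =
        fun x => dPot (fun x y => dist x y) ν x - dPot (fun x y => dist x y) ρ x :=
      funext fun x => dPot_sub ν ρ x
    rw [hfe, sInt_sub_fun τ (dPot_continuous ν) (dPot_continuous ρ)]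
  have h3 : sInt ρ (dPot (fun x y => dist x y) ν) = sInt ν (dPot (fun x y => dist x y) ρ) := by
    rw [← en_def, ← en_def, en_comm]
  rw [h1, h2, h2, h3, ← en_def ν ν, ← en_def ν ρ, ← en_def ρ ρ]
  ring

lemma tendsto_sInt_dPot (μ : ℕ → SignedMeasure X) (c : ℝ)
    (hd : TendstoUniformly (fun n x => dPot (fun x y => dist x y) (μ n) x)
      (fun _ => c) Filter.atTop) (ν : SignedMeasure X) :
    Filter.Tendsto (fun n => sInt ν (dPot (fun x y => dist x y) (μ n)))
      Filter.atTop (nhds (c * ν Set.univ)) := by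
  rw [Metric.tendsto_atTop]
  intro ε hε
  have htv : (0:ℝ) < tvw ν + 1 := by linarith [tvw_nonneg ν]
  have hε' : 0 < ε / (tvw ν + 1) := by positivity
  rw [Metric.tendstoUniformly_iff] at hd
  obtain ⟨N, hN⟩ := Filter.eventually_atTop.mp (hd _ hε')
  refine ⟨N, fun n hn => ?_⟩
  have key : sInt ν (dPot (fun x y => dist x y) (μ n)) - c * ν Set.univ
      = sInt ν (fun x => dPot (fun x y => dist x y) (μ n) x - c) := by
    rw [sInt_sub_fun ν (dPot_continuous (μ n)) continuous_const, sInt_const]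
  have hb : ∀ x, |dPot (fun x y => dist x y) (μ n) x - c| ≤ ε / (tvw ν + 1) := by
    intro x
    have := hN n hn x
    rw [Real.dist_eq, abs_sub_comm] at this
    exact this.le
  have hbd := sInt_bound ν ((dPot_continuous (μ n)).sub continuous_const) hb
  rw [Real.dist_eq, key]
  calc |sInt ν (fun x => dPot (fun x y => dist x y) (μ n) x - c)|
      ≤ ε / (tvw ν + 1) * tvw ν := hbd
    _ < ε / (tvw ν + 1) * (tvw ν + 1) := by
        apply mul_lt_mul_of_pos_left _ hε'
        linarith
    _ = ε := div_mul_cancel₀ ε (ne_of_gt htv)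

end Aux

open Filter

/-- If `μ_n` is a `d`-invariant sequence in `M₁(X)` with value `c` (Cauchy in the
seminorm, with `d_{μ_n} → c·1` uniformly), then `M(X) = c < ∞` and `μ_n` is a maximal
sequence, i.e. `I(μ_n) → M(X) = c`. -/
theorem stmt13 {X : Type*} [MetricSpace X] [CompactSpace X] [MeasurableSpace X] [BorelSpace X]
    (hq : ∀ ν : SignedMeasure X, ν Set.univ = (0 : ℝ) → en (fun x y => dist x y) ν ν ≤ 0)
    (μ : ℕ → SignedMeasure X) (hμ : ∀ n, (μ n) Set.univ = (1 : ℝ)) (c : ℝ)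
    (hCauchy : ∀ ε > (0 : ℝ), ∃ N : ℕ, ∀ p ≥ N, ∀ q ≥ N,
      Real.sqrt (-(en (fun x y => dist x y) (μ p - μ q) (μ p - μ q))) < ε)
    (hd : TendstoUniformly (fun n x => dPot (fun x y => dist x y) (μ n) x)
      (fun _ => c) Filter.atTop) :
    IsLUB (MSet X) c ∧
      Filter.Tendsto (fun n => en (fun x y => dist x y) (μ n) (μ n))
        Filter.atTop (nhds c) := by

  have he_le : ∀ n m : ℕ, en (fun x y => dist x y) (μ n - μ m) (μ n - μ m) ≤ 0 := by
    intro n m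
    apply hq
    rw [VectorMeasure.sub_apply, hμ n, hμ m]
    ring
  have hCx : ∀ ε > (0:ℝ), ∃ N : ℕ, ∀ n ≥ N, ∀ m ≥ N,
      -ε < en (fun x y => dist x y) (μ n - μ m) (μ n - μ m) := by
    intro ε hε
    obtain ⟨N, hN⟩ := hCauchy (Real.sqrt ε) (Real.sqrt_pos.mpr hε)
    refine ⟨N, fun n hn m hm => ?_⟩
    have h1 := hN n hn m hm
    have h2 := Real.sq_sqrt (neg_nonneg.mpr (he_le n m))
    have h3 := Real.sq_sqrt hε.le
    have h4 := Real.sqrt_nonneg (-(en (fun x y => dist x y) (μ n - μ m) (μ n - μ m)))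
    have h5 := Real.sqrt_nonneg ε
    nlinarith
  have hs : ∀ ν : SignedMeasure X, ν Set.univ = (1:ℝ) →
      Tendsto (fun n => sInt ν (dPot (fun x y => dist x y) (μ n))) atTop (nhds c) := by
    intro ν hν
    have := tendsto_sInt_dPot μ c hd ν
    rwa [hν, mul_one] at this
  have hF : ∀ n m : ℕ, en (fun x y => dist x y) (μ n - μ m) (μ n - μ m)
      = en (fun x y => dist x y) (μ n) (μ n) + en (fun x y => dist x y) (μ m) (μ m)
        - 2 * sInt (μ m) (dPot (fun x y => dist x y) (μ n)) := by
    intro n m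
    rw [enF (μ n) (μ m), ← en_def (μ n) (μ m), en_comm (μ n) (μ m), en_def (μ m) (μ n)]
  have hICauchy : CauchySeq (fun n => en (fun x y => dist x y) (μ n) (μ n)) := by
    rw [Metric.cauchySeq_iff]
    intro ε hε
    obtain ⟨N₁, hN₁⟩ := hCx (ε/8) (by positivity)
    obtain ⟨N₂, hN₂⟩ := Metric.tendsto_atTop.mp (hs (μ N₁) (hμ N₁)) (ε/8) (by positivity)
    refine ⟨max N₁ N₂, fun m hm n hn => ?_⟩
    have em := hF m N₁
    have en' := hF n N₁
    have h1 := hN₁ m (le_trans (le_max_left _ _) hm) N₁ le_rfl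
    have h2 := hN₁ n (le_trans (le_max_left _ _) hn) N₁ le_rfl
    have h3 := hN₂ m (le_trans (le_max_right _ _) hm)
    have h4 := hN₂ n (le_trans (le_max_right _ _) hn)
    have e1 := he_le m N₁
    have e2 := he_le n N₁
    rw [Real.dist_eq, abs_lt] at h3 h4
    rw [Real.dist_eq, abs_lt]
    constructor <;> linarith
  obtain ⟨L, hL⟩ := cauchySeq_tendsto_of_complete hICauchy
  have hLb : ∀ ε > (0:ℝ), -ε ≤ 2*L - 2*c ∧ 2*L - 2*c ≤ 0 := by
    intro ε hε
    obtain ⟨N₁, hN₁⟩ := hCx ε hε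
    have key : ∀ m ≥ N₁, -ε ≤ L + en (fun x y => dist x y) (μ m) (μ m) - 2*c ∧
        L + en (fun x y => dist x y) (μ m) (μ m) - 2*c ≤ 0 := by
      intro m hm
      have heq : (fun n => en (fun x y => dist x y) (μ n - μ m) (μ n - μ m))
          = fun n => (en (fun x y => dist x y) (μ n) (μ n)
              + en (fun x y => dist x y) (μ m) (μ m))
            - 2 * sInt (μ m) (dPot (fun x y => dist x y) (μ n)) := by
        funext n
        rw [hF n m]
      have htend : Tendsto (fun n => en (fun x y => dist x y) (μ n - μ m) (μ n - μ m)) atTop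
          (nhds ((L + en (fun x y => dist x y) (μ m) (μ m)) - 2*c)) := by
        rw [heq]
        exact (hL.add tendsto_const_nhds).sub ((hs (μ m) (hμ m)).const_mul 2)
      constructor
      · have := ge_of_tendsto htend
          (eventually_atTop.mpr ⟨N₁, fun n hn => (hN₁ n hn m hm).le⟩)
        linarith
      · have := le_of_tendsto htend
          (eventually_atTop.mpr ⟨0, fun n _ => he_le n m⟩)
        linarith
    have htend2 : Tendsto (fun m => L + en (fun x y => dist x y) (μ m) (μ m) - 2*c) atTop
        (nhds (L + L - 2*c)) := by
      exact (tendsto_const_nhds.add hL).sub tendsto_const_nhds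
    constructor
    · have := ge_of_tendsto htend2 (eventually_atTop.mpr ⟨N₁, fun m hm => (key m hm).1⟩)
      linarith
    · have := le_of_tendsto htend2 (eventually_atTop.mpr ⟨N₁, fun m hm => (key m hm).2⟩)
      linarith
  have hLc : L = c := by
    have h1 : 2*L - 2*c ≤ 0 := (hLb 1 one_pos).2
    have h2 : 0 ≤ 2*L - 2*c := by
      by_contra h
      push_neg at h
      have := (hLb (-(2*L-2*c)/2) (by linarith)).1
      linarith
    linarith
  have hL' : Tendsto (fun n => en (fun x y => dist x y) (μ n) (μ n)) atTop (nhds c) :=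
    hLc ▸ hL
  refine ⟨⟨?_, ?_⟩, hL'⟩
  · rintro r ⟨ν, hν1, rfl⟩
    have hFn : ∀ n, en (fun x y => dist x y) ν ν
        ≤ 2 * sInt ν (dPot (fun x y => dist x y) (μ n))
          - en (fun x y => dist x y) (μ n) (μ n) := by
      intro n
      have h0 := hq (ν - μ n) (by rw [VectorMeasure.sub_apply, hν1, hμ n]; ring)
      rw [enF ν (μ n)] at h0
      linarith
    have htend : Tendsto (fun n => 2 * sInt ν (dPot (fun x y => dist x y) (μ n))
        - en (fun x y => dist x y) (μ n) (μ n)) atTop (nhds (2*c - c)) :=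
      ((hs ν hν1).const_mul 2).sub hL'
    have := ge_of_tendsto htend (Eventually.of_forall hFn)
    linarith
  · intro b hb
    exact le_of_tendsto hL' (Eventually.of_forall fun n => hb ⟨μ n, hμ n, rfl⟩)
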